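/- For every integer τ ≥ 1, the weighted sum of inverse square roots satisfies the upper bound Σ_{i=1}^{τ} α_τ^i / √i ≤ 2/√τ. -/

import Mathlib

open Finset

/-- The learning rate `α_τ = (H+1)/(H+τ)`. -/
noncomputable def lr (H : ℝ) (τ : ℕ) : ℝ := (H + 1) / (H + τ)

/-- The coefficients `α_τ^i`. -/
noncomputable def acoef (H : ℝ) (τ i : ℕ) : ℝ :=
  if i = 0 then ∏ j ∈ Finset.Icc 1 τ, (1 - lr H j)
  else lr H i * ∏ j ∈ Finset.Icc (i + 1) τ, (1 - lr H j)

theorem stmt_1 (H : ℝ) (hH : 1 ≤ H) (τ : ℕ) (hτ : 1 ≤ τ) :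
    ∑ i ∈ Finset.Icc 1 τ, acoef H τ i / Real.sqrt i ≤ 2 / Real.sqrt τ := by
  induction τ, hτ using Nat.le_induction with
  | base =>
    have h1 : (H : ℝ) + 1 ≠ 0 := by linarith
    simp [acoef, lr, Finset.Icc_eq_empty (by omega : ¬ (2:ℕ) ≤ 1), div_self h1]
  | succ n hn ih =>
    set α := lr H (n + 1) with hα
    have hn0 : (0:ℝ) ≤ n := Nat.cast_nonneg n
    have hd : (0:ℝ) < H + (↑n + 1) := by linarith
    -- recursion for the sum
    have hlast : acoef H (n + 1) (n + 1) = α := by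
      simp [acoef, Finset.Icc_eq_empty (by omega : ¬ (n+1+1) ≤ n+1)]
      exact hα.symm
    have hsum : ∑ i ∈ Icc 1 (n + 1), acoef H (n + 1) i / Real.sqrt i
        = (1 - α) * ∑ i ∈ Icc 1 n, acoef H n i / Real.sqrt i + α / Real.sqrt (n + 1) := by
      rw [Finset.sum_Icc_succ_top (by omega : 1 ≤ n + 1), hlast, Finset.mul_sum]
      push_cast
      congr 1
      apply Finset.sum_congr rfl
      intro i hi
      simp only [Finset.mem_Icc] at hi
      have hi0 : i ≠ 0 := by omega
      rw [acoef, acoef, if_neg hi0, if_neg hi0,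
        Finset.prod_Icc_succ_top (by omega : i + 1 ≤ n + 1)]
      ring
    rw [hsum]
    push_cast
    -- bounds on α
    have hαle : 1 - α = ↑n / (H + (↑n + 1)) := by
      rw [hα, lr]; push_cast; field_simp
      ring
    have hα0 : 0 ≤ 1 - α := by rw [hαle]; positivity
    have step1 : (1 - α) * ∑ i ∈ Icc 1 n, acoef H n i / Real.sqrt i + α / Real.sqrt (↑n + 1)
        ≤ (1 - α) * (2 / Real.sqrt n) + α / Real.sqrt (↑n + 1) := by
      have := mul_le_mul_of_nonneg_left ih hα0
      linarith
    refine step1.trans ?_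
    -- final numeric inequality
    have ha : 0 < Real.sqrt n := Real.sqrt_pos.mpr (by exact_mod_cast hn)
    have hb : 0 < Real.sqrt (↑n + 1) := Real.sqrt_pos.mpr (by linarith)
    have ha2 : Real.sqrt n ^ 2 = n := Real.sq_sqrt hn0
    have hb2 : Real.sqrt (↑n + 1) ^ 2 = ↑n + 1 := Real.sq_sqrt (by linarith)
    have hαv : α = (H + 1) / (H + (↑n + 1)) := by rw [hα, lr]; push_cast; ring_nf
    rw [hαle, hαv]
    set a := Real.sqrt (n:ℝ) with hadef
    set b := Real.sqrt ((n:ℝ) + 1) with hbdef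
    have key : 0 ≤ a * (a - b)^2 := mul_nonneg ha.le (sq_nonneg _)
    rw [le_div_iff₀ hb, add_mul]
    have e1 : ↑n / (H + (↑n + 1)) * (2 / a) * b + (H + 1) / (H + (↑n + 1)) / b * b
        = (2 * ↑n * b + (H + 1) * a) / ((H + (↑n + 1)) * a) := by
      field_simp
    rw [e1, div_le_iff₀ (by positivity)]
    nlinarith [key, ha2, hb2, mul_pos ha hb, sq_nonneg (a-b), sq_nonneg (a+b)]
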